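/- Let τ ∈ ℂ lie in the fundamental region. For each n ∈ ℤ the inner limit c_n = lim_{M→∞} Σ_{m=-M}^{M} 1/(m+nτ)² exists (with the term (m,n) = (0,0) omitted), the outer limit E₂ = lim_{N→∞} Σ_{n=-N}^{N} c_n exists, and E₂ = Ẽ₂(τ) − (4i/τ) arctan(iτ), where arctan denotes the principal branch of the complex arctangent. -/

import Mathlib

open Finset Filter Complex Topology

namespace EisVsSq

lemma Icc_int_eq_map (N : ℕ) :
    Finset.Icc (-(N:ℤ)) N
      = (Finset.range (2*N+1)).map ⟨fun k : ℕ => (k:ℤ) - N, fun a b h => by simpa using h⟩ := by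
  ext m
  simp only [Finset.mem_Icc, Finset.mem_map, Finset.mem_range, Function.Embedding.coeFn_mk]
  constructor
  · intro h; exact ⟨(m + N).toNat, by omega, by show (((m + N).toNat : ℕ) : ℤ) - N = m; omega⟩
  · rintro ⟨k, hk, rfl⟩; show -(N:ℤ) ≤ (k:ℤ) - N ∧ (k:ℤ) - N ≤ N; omega

lemma sum_Icc_int (g : ℤ → ℂ) (K : ℕ) :
    ∑ m ∈ Finset.Icc (-(K:ℤ)) K, g m
      = g 0 + ∑ j ∈ Finset.range K, (g ((j:ℤ)+1) + g (-((j:ℤ)+1))) := by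
  induction K with
  | zero => simp
  | succ K ih =>
    have h : Finset.Icc (-((K+1:ℕ)):ℤ) ((K+1:ℕ):ℤ)
        = insert ((K:ℤ)+1) (insert (-((K:ℤ)+1)) (Finset.Icc (-(K:ℤ)) K)) := by
      ext m
      simp only [Finset.mem_Icc, Finset.mem_insert]
      omega
    rw [h, Finset.sum_insert (by simp only [Finset.mem_insert, Finset.mem_Icc]; omega),
        Finset.sum_insert (by simp only [Finset.mem_Icc]; omega), ih,
        Finset.sum_range_succ]
    ring

lemma tendsto_Icc_atTop :
    Tendsto (fun M : ℕ => Finset.Icc (-(M:ℤ)) (M:ℤ)) atTop atTop := by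
  apply tendsto_atTop_finset_of_monotone
  · intro a b hab
    exact Finset.Icc_subset_Icc (by omega) (by omega)
  · intro m
    exact ⟨m.natAbs, by simp only [Finset.mem_Icc]; omega⟩

lemma le_of_sq_le_sq' {a b : ℝ} (hb : 0 ≤ b) (h : a^2 ≤ b^2) (ha : 0 ≤ a) : a ≤ b := by
  nlinarith

lemma key_bound' {τ : ℂ} (hre : |τ.re| ≤ 1/2) (hns : 1 ≤ Complex.normSq τ) (m n : ℤ) :
    ((m:ℝ)^2 + (n:ℝ)^2)/2 ≤ (‖(m:ℂ) + n*τ‖)^2 := by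
  rw [Complex.sq_norm]
  have h : Complex.normSq ((m:ℂ) + n*τ)
      = ((m:ℝ) + n*τ.re)^2 + (n*τ.im)^2 := by
    simp [Complex.normSq_apply, Complex.add_re, Complex.add_im, Complex.mul_re,
      Complex.mul_im]
    ring
  rw [h]
  have h1 : Complex.normSq τ = τ.re^2 + τ.im^2 := by
    simp [Complex.normSq_apply]; ring
  rw [h1] at hns
  rw [abs_le] at hre
  nlinarith [sq_nonneg ((m:ℝ) + n), sq_nonneg ((m:ℝ) - n), sq_nonneg ((n:ℝ)*τ.im),
    sq_nonneg (n:ℝ)]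

lemma tailEst {z : ℂ} {N M : ℕ} (hN : 1 ≤ N) (hNM : N ≤ M)
    (H : ∀ j : ℕ, ((j:ℝ)^2)/2 ≤ (‖(j:ℂ)+z‖)^2) :
    ‖(∑ j ∈ Finset.Ico N M, 1/(((j:ℂ)+1)+z)^2) - (1/((N:ℂ)+z) - 1/((M:ℂ)+z))‖
      ≤ 4/N^2 := by
  have habs : ∀ j : ℕ, (j:ℝ)/2 ≤ ‖(j:ℂ)+z‖ := by
    intro j
    refine le_of_sq_le_sq' (norm_nonneg _) ?_ (by positivity)
    nlinarith [H j]
  have hz : ∀ j : ℕ, 1 ≤ j → ((j:ℂ)+z) ≠ 0 := by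
    intro j hj h0
    have h1 := habs j
    rw [h0] at h1
    simp only [norm_zero] at h1
    have : (1:ℝ) ≤ (j:ℝ) := by exact_mod_cast hj
    linarith
  set F : ℕ → ℂ := fun j => 1/((j:ℂ)+z) with hF
  have hcast : ∀ j : ℕ, (((j+1:ℕ):ℂ)) = ((j:ℂ)+1) := by intro j; push_cast; ring
  have htel : ∑ j ∈ Finset.Ico N M, (F j - F (j+1)) = F N - F M := by
    rw [Finset.sum_Ico_eq_sub _ hNM, Finset.sum_range_sub' F, Finset.sum_range_sub' F]
    ring
  have hsplit : (∑ j ∈ Finset.Ico N M, 1/(((j:ℂ)+1)+z)^2) - (1/((N:ℂ)+z) - 1/((M:ℂ)+z))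
      = ∑ j ∈ Finset.Ico N M, (1/(((j:ℂ)+1)+z)^2 - (F j - F (j+1))) := by
    rw [Finset.sum_sub_distrib, htel]
  rw [hsplit]
  have hterm : ∀ j ∈ Finset.Ico N M,
      ‖1/(((j:ℂ)+1)+z)^2 - (F j - F (j+1))‖
        ≤ (4/((N:ℝ)+1)) * (1/(j:ℝ) - 1/((j:ℝ)+1)) := by
    intro j hj
    rw [Finset.mem_Ico] at hj
    have hj1 : 1 ≤ j := le_trans hN hj.1
    have hjR : (1:ℝ) ≤ (j:ℝ) := by exact_mod_cast hj1
    have hNj : (N:ℝ) ≤ (j:ℝ) := by exact_mod_cast hj.1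
    have h1 : ((j:ℂ)+z) ≠ 0 := hz j hj1
    have h2 : (((j:ℂ)+1)+z) ≠ 0 := by
      have := hz (j+1) (by omega)
      rwa [hcast] at this
    have hval : 1/(((j:ℂ)+1)+z)^2 - (F j - F (j+1))
        = -(1/(((j:ℂ)+z) * ((((j:ℂ)+1)+z))^2)) := by
      simp only [hF, hcast]
      field_simp
      ring
    rw [hval, norm_neg]
    have ha : (j:ℝ)/2 ≤ ‖(j:ℂ)+z‖ := habs j
    have hb2 : (((j:ℝ)+1)^2)/2 ≤ (‖((j:ℂ)+1)+z‖)^2 := by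
      have := H (j+1)
      rw [hcast] at this
      push_cast at this
      exact this
    have hapos : 0 < ‖(j:ℂ)+z‖ := lt_of_lt_of_le (by linarith) ha
    have hbpos : 0 < ‖((j:ℂ)+1)+z‖ := by
      rcases (norm_nonneg (((j:ℂ)+1)+z)).lt_or_eq with h | h
      · exact h
      · exfalso; nlinarith
    have hnorm : ‖1/(((j:ℂ)+z) * ((((j:ℂ)+1)+z))^2)‖
        = 1/(‖(j:ℂ)+z‖ * (‖((j:ℂ)+1)+z‖)^2) := by
      simp [norm_div, map_mul, map_pow]
    rw [hnorm]
    have hrhs : (4/((N:ℝ)+1)) * (1/(j:ℝ) - 1/((j:ℝ)+1))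
        = 4/(((N:ℝ)+1)*((j:ℝ)*((j:ℝ)+1))) := by
      field_simp
      ring
    rw [hrhs, div_le_div_iff₀ (by positivity) (by positivity)]
    have h4 : (j:ℝ)/2 * ((((j:ℝ)+1)^2)/2)
        ≤ ‖(j:ℂ)+z‖ * (‖((j:ℂ)+1)+z‖)^2 :=
      mul_le_mul ha hb2 (by positivity) (le_of_lt hapos)
    nlinarith [h4, mul_nonneg (mul_nonneg (by linarith : (0:ℝ) ≤ (j:ℝ)) (by linarith : (0:ℝ) ≤ (j:ℝ)+1)) (by linarith : (0:ℝ) ≤ (j:ℝ) - N)]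
  calc ‖∑ j ∈ Finset.Ico N M, (1/(((j:ℂ)+1)+z)^2 - (F j - F (j+1)))‖
      ≤ ∑ j ∈ Finset.Ico N M, ‖1/(((j:ℂ)+1)+z)^2 - (F j - F (j+1))‖ :=
        norm_sum_le _ _
    _ ≤ ∑ j ∈ Finset.Ico N M, (4/((N:ℝ)+1)) * (1/(j:ℝ) - 1/((j:ℝ)+1)) :=
        Finset.sum_le_sum hterm
    _ = (4/((N:ℝ)+1)) * ∑ j ∈ Finset.Ico N M, ((fun j : ℕ => 1/(j:ℝ)) j - (fun j : ℕ => 1/(j:ℝ)) (j+1)) := by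
        rw [← Finset.mul_sum]
        congr 1
        refine Finset.sum_congr rfl fun j _ => ?_
        push_cast
        ring
    _ = (4/((N:ℝ)+1)) * (1/(N:ℝ) - 1/(M:ℝ)) := by
        rw [Finset.sum_Ico_eq_sub _ hNM, Finset.sum_range_sub' (fun j : ℕ => 1/(j:ℝ)),
          Finset.sum_range_sub' (fun j : ℕ => 1/(j:ℝ))]
        ring
    _ ≤ 4/(N:ℝ)^2 := by
        have hNR : (1:ℝ) ≤ (N:ℝ) := by exact_mod_cast hN
        have hMR : (0:ℝ) ≤ 1/(M:ℝ) := by positivity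
        have key2 : 4/((N:ℝ)+1) * (1/(N:ℝ) - 1/(M:ℝ)) ≤ 4/((N:ℝ)+1) * (1/(N:ℝ)) :=
          mul_le_mul_of_nonneg_left (by linarith) (by positivity)
        have key3 : 4/((N:ℝ)+1) * (1/(N:ℝ)) = 4/(((N:ℝ)+1)*(N:ℝ)) := by
          rw [div_mul_div_comm, mul_one]
        have key4 : 4/(((N:ℝ)+1)*(N:ℝ)) ≤ 4/(N:ℝ)^2 := by
          rw [div_le_div_iff₀ (by positivity) (by positivity)]
          nlinarith
        linarith

lemma logStep {τ : ℂ} (hre : |τ.re| ≤ 1/2) (him : 0 < τ.im) (hns : 1 ≤ Complex.normSq τ)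
    {N : ℕ} (hN : 4*‖τ‖ ≤ (N:ℝ)) {n : ℤ} (hn1 : -(N:ℤ) ≤ n) (hn2 : n ≤ N) :
    ‖1/((N:ℂ)+n*τ) - (Complex.log ((N:ℂ)+((n:ℂ)+1)*τ) - Complex.log ((N:ℂ)+n*τ))/τ‖
      ≤ 4*‖τ‖/(N:ℝ)^2 := by
  have habsτ : 1 ≤ ‖τ‖ := by
    refine le_of_sq_le_sq' (norm_nonneg _) ?_ zero_le_one
    rw [Complex.sq_norm]; simpa using hns
  have hτ0 : τ ≠ 0 := by
    intro h; rw [h] at him; simp at him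
  have hNR : (4:ℝ) ≤ (N:ℝ) := le_trans (by nlinarith) hN
  have hN0 : (0:ℝ) < (N:ℝ) := by linarith
  set w : ℂ := (N:ℂ) + n*τ with hw
  have hnR1 : -(N:ℝ) ≤ (n:ℝ) := by exact_mod_cast hn1
  have hnR2 : (n:ℝ) ≤ (N:ℝ) := by exact_mod_cast hn2
  have habsw : (N:ℝ)/2 ≤ ‖w‖ := by
    refine le_of_sq_le_sq' (norm_nonneg _) ?_ (by positivity)
    have := key_bound' hre hns (N:ℤ) n
    push_cast at this
    nlinarith [sq_nonneg (n:ℝ)]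
  have hw0 : w ≠ 0 := by
    intro h; rw [h] at habsw; simp at habsw; linarith
  set u : ℂ := τ/w with hu
  have habsu : ‖u‖ ≤ 2*‖τ‖/(N:ℝ) := by
    rw [hu, norm_div]
    rw [div_le_div_iff₀ (by linarith [lt_of_lt_of_le (by linarith : (0:ℝ) < (N:ℝ)/2) habsw]) hN0]
    nlinarith [norm_nonneg τ]
  have hu2 : ‖u‖ ≤ 1/2 := by
    refine le_trans habsu ?_
    rw [div_le_div_iff₀ hN0 (by norm_num)]
    linarith
  have h1ure : (1:ℝ)/2 ≤ (1+u).re := by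
    have h1 : |u.re| ≤ ‖u‖ := Complex.abs_re_le_norm u
    rw [abs_le] at h1
    simp only [Complex.add_re, Complex.one_re]
    linarith
  have h1u0 : (1:ℂ)+u ≠ 0 := by
    intro h; rw [h] at h1ure; simp at h1ure; linarith
  have hwre : 0 < w.re := by
    have h1 : w.re = (N:ℝ) + (n:ℝ)*τ.re := by
      simp [hw, Complex.add_re, Complex.mul_re]
    rw [h1]
    rw [abs_le] at hre
    nlinarith
  have hmul : w * (1+u) = w + τ := by
    rw [hu]; field_simp
  have harg : Complex.arg w + Complex.arg (1+u) ∈ Set.Ioc (-Real.pi) Real.pi := by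
    have h1 : |Complex.arg w| < Real.pi/2 :=
      Complex.abs_arg_lt_pi_div_two_iff.mpr (Or.inl hwre)
    have h2 : |Complex.arg (1+u)| < Real.pi/2 :=
      Complex.abs_arg_lt_pi_div_two_iff.mpr (Or.inl (by linarith))
    rw [abs_lt] at h1 h2
    constructor <;> [linarith; linarith]
  have hlog : Complex.log (w + τ) = Complex.log w + Complex.log (1+u) := by
    rw [← hmul, Complex.log_mul hw0 h1u0 harg]
  have hwτ : (N:ℂ) + ((n:ℂ)+1)*τ = w + τ := by rw [hw]; ring
  have hexpr : 1/w - (Complex.log ((N:ℂ)+((n:ℂ)+1)*τ) - Complex.log w)/τ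
      = -((Complex.log (1+u) - u)/τ) := by
    rw [hwτ, hlog, hu]
    field_simp
    ring
  rw [hexpr, norm_neg, norm_div]
  have hlogb : ‖Complex.log (1+u) - u‖ ≤ (‖u‖)^2 := by
    have h := Complex.norm_log_one_add_sub_self_le (by linarith : ‖u‖ < 1)
    have h2 : (1 - ‖u‖)⁻¹ ≤ 2 := by
      rw [inv_le_comm₀ (by linarith) (by norm_num)]
      linarith
    calc ‖Complex.log (1+u) - u‖ ≤ (‖u‖)^2 * (1 - ‖u‖)⁻¹ / 2 := h
      _ ≤ (‖u‖)^2 * 2 / 2 := by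
          apply div_le_div_of_nonneg_right _ (by norm_num)
          exact mul_le_mul_of_nonneg_left h2 (by positivity)
      _ = (‖u‖)^2 := by ring
  have habsu2 : (‖u‖)^2 ≤ (2*‖τ‖/(N:ℝ))^2 := by
    apply pow_le_pow_left₀ (norm_nonneg u) habsu
  calc ‖Complex.log (1+u) - u‖ / ‖τ‖ ≤ (2*‖τ‖/(N:ℝ))^2 / ‖τ‖ := by
        apply div_le_div_of_nonneg_right _ (by linarith)
        · exact le_trans hlogb habsu2
    _ = 4*‖τ‖/(N:ℝ)^2 * (‖τ‖ / ‖τ‖) := by ring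
    _ = 4*‖τ‖/(N:ℝ)^2 := by
        rw [div_self (by linarith : ‖τ‖ ≠ 0), mul_one]

end EisVsSq
open EisVsSq Finset Filter Complex Topology in
private lemma norm_add_sub_add_le {a b x y : ℂ} {r : ℝ} (h1 : ‖a - x‖ ≤ r) (h2 : ‖b - y‖ ≤ r) :
    ‖(a+b)-(x+y)‖ ≤ r + r := by
  have h : (a+b)-(x+y) = (a-x)+(b-y) := by ring
  rw [h]
  exact le_trans (norm_add_le _ _) (add_le_add h1 h2)

/-- `S_K = Σ_{(m,n)∈ℤ²∖{(0,0)}, |m|≤K, |n|≤K} 1/(m+nτ)²`. -/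
noncomputable def latticeSquareSum2 (τ : ℂ) (K : ℕ) : ℂ :=
  ∑ p ∈ (Finset.Icc (-(K : ℤ)) (K : ℤ) ×ˢ Finset.Icc (-(K : ℤ)) (K : ℤ)).erase (0, 0),
    1 / ((p.1 : ℂ) + (p.2 : ℂ) * τ) ^ 2

set_option maxHeartbeats 1000000 in
open EisVsSq Finset Filter Complex Topology in
/-- **Eisenstein's summation versus summation over squares (formula (33)).**
For `τ` in the fundamental region, with `Ẽ₂(τ) = lim_K S_K`, the iterated limits
`c_n = lim_M Σ_{m=-M}^{M} 1/(m+nτ)²` (omitting `(0,0)`) and `E₂ = lim_N Σ_{n=-N}^{N} c_n`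
exist, and `E₂ = Ẽ₂(τ) − (4i/τ) arctan(iτ)`. -/
theorem eisenstein_vs_square (τ : ℂ) (hτ1 : -(1 / 2 : ℝ) < τ.re)
    (hτ2 : τ.re ≤ 1 / 2) (hτ3 : 0 < τ.im) (hτ4 : 1 ≤ ‖τ‖)
    (hτ5 : ‖τ‖ = 1 → 0 ≤ τ.re)
    (E2t : ℂ) (hE2t : Filter.Tendsto (latticeSquareSum2 τ) Filter.atTop (nhds E2t)) :
    ∃ c : ℤ → ℂ,
      (∀ n : ℤ, Filter.Tendsto
        (fun M : ℕ => ∑ m ∈ (Finset.Icc (-(M : ℤ)) (M : ℤ)).filter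
            (fun m => ¬(m = 0 ∧ n = 0)),
          1 / ((m : ℂ) + (n : ℂ) * τ) ^ 2)
        Filter.atTop (nhds (c n))) ∧
      Filter.Tendsto (fun N : ℕ => ∑ n ∈ Finset.Icc (-(N : ℤ)) (N : ℤ), c n)
        Filter.atTop
        (nhds (E2t - (4 * Complex.I / τ) * Complex.arctan (Complex.I * τ))) := by
  classical
  have hre : |τ.re| ≤ 1/2 := abs_le.mpr ⟨le_of_lt hτ1, hτ2⟩
  have hns : 1 ≤ Complex.normSq τ := by
    rw [← Complex.sq_norm]; nlinarith [hτ4]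
  have hτ0 : τ ≠ 0 := by intro h; rw [h] at hτ3; simp at hτ3
  set g : ℤ → ℤ → ℂ := fun n m => 1/((m:ℂ)+(n:ℂ)*τ)^2 with hg
  have hsumm : ∀ n : ℤ, Summable (g n) := by
    intro n
    apply Summable.of_norm_bounded_eventually (g := fun m : ℤ => 2/(m:ℝ)^2)
    · have h1 : Summable (fun m : ℤ => 1/(m:ℝ)^2) :=
        Real.summable_one_div_int_pow.mpr one_lt_two
      refine (h1.mul_left (2:ℝ)).congr fun m => ?_
      ring
    · refine (Filter.eventually_cofinite_ne (0:ℤ)).mono fun m hm => ?_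
      have hmR : (m:ℝ) ≠ 0 := Int.cast_ne_zero.mpr hm
      have hmpos : (0:ℝ) < (m:ℝ)^2 := by positivity
      have hk := key_bound' hre hns m n
      have habs2 : ((m:ℝ)^2)/2 ≤ (‖(m:ℂ)+(n:ℂ)*τ‖)^2 := by
        nlinarith [sq_nonneg (n:ℝ)]
      have habspos : (0:ℝ) < (‖(m:ℂ)+(n:ℂ)*τ‖)^2 := by nlinarith
      have hnorm : ‖g n m‖ = 1/(‖(m:ℂ)+(n:ℂ)*τ‖)^2 := by
        simp [hg, norm_div, map_pow]
      rw [hnorm, div_le_div_iff₀ habspos hmpos]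
      nlinarith
  set c : ℤ → ℂ := fun n => ∑' m, g n m with hc
  have hinner' : ∀ n : ℤ,
      Filter.Tendsto (fun M : ℕ => ∑ m ∈ Finset.Icc (-(M:ℤ)) (M:ℤ), g n m)
        Filter.atTop (nhds (c n)) :=
    fun n => (hsumm n).hasSum.comp tendsto_Icc_atTop
  refine ⟨c, fun n => ?_, ?_⟩
  · refine (hinner' n).congr fun M => ?_
    refine (Finset.sum_filter_of_ne fun m _ hm0 => ?_).symm
    intro hmn
    apply hm0
    simp [hg, hmn.1, hmn.2]
  · -- outer limit
    have hzero : ∀ z : ℂ, (∀ j : ℕ, ((j:ℝ)^2)/2 ≤ (‖(j:ℂ)+z‖)^2) →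
        Filter.Tendsto (fun M : ℕ => 1/((M:ℂ)+z)) Filter.atTop (nhds 0) := by
      intro z hz
      apply squeeze_zero_norm' (a := fun M : ℕ => 2/(M:ℝ))
      · filter_upwards [Filter.eventually_ge_atTop 1] with M hM
        have hMR : (1:ℝ) ≤ (M:ℝ) := by exact_mod_cast hM
        have habs : (M:ℝ)/2 ≤ ‖(M:ℂ)+z‖ :=
          le_of_sq_le_sq' (norm_nonneg _) (by nlinarith [hz M]) (by positivity)
        have hpos : (0:ℝ) < ‖(M:ℂ)+z‖ := by linarith
        have hn : ‖1/((M:ℂ)+z)‖ = 1/‖(M:ℂ)+z‖ := by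
          simp [norm_div]
        rw [hn, div_le_div_iff₀ hpos (by linarith)]
        nlinarith
      · exact tendsto_const_div_atTop_nhds_zero_nat 2
    have hH : ∀ n : ℤ, ∀ j : ℕ, ((j:ℝ)^2)/2 ≤ (‖(j:ℂ)+(n:ℂ)*τ‖)^2 := by
      intro n j
      have := key_bound' hre hns (j:ℤ) n
      push_cast at this
      nlinarith [sq_nonneg (n:ℝ)]
    have hHneg : ∀ n : ℤ, ∀ j : ℕ, ((j:ℝ)^2)/2 ≤ (‖(j:ℂ)+(-((n:ℂ)*τ))‖)^2 := by
      intro n j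
      have h := key_bound' hre hns (j:ℤ) (-n)
      have heq : (((j:ℤ)):ℂ) + ((-n:ℤ):ℂ)*τ = (j:ℂ)+(-((n:ℂ)*τ)) := by push_cast; ring
      rw [heq] at h
      push_cast at h
      nlinarith [sq_nonneg (n:ℝ)]
    have htail : ∀ N : ℕ, 1 ≤ N → ∀ n : ℤ, -(N:ℤ) ≤ n → n ≤ N →
        ‖(c n - ∑ m ∈ Finset.Icc (-(N:ℤ)) (N:ℤ), g n m)
          - (1/((N:ℂ)+(n:ℂ)*τ) + 1/((N:ℂ)+(-((n:ℂ)*τ))))‖ ≤ 8/(N:ℝ)^2 := by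
      intro N hN n hn1 hn2
      have hdiff : ∀ M : ℕ, N ≤ M →
          (∑ m ∈ Finset.Icc (-(M:ℤ)) (M:ℤ), g n m)
            - (∑ m ∈ Finset.Icc (-(N:ℤ)) (N:ℤ), g n m)
          = (∑ j ∈ Finset.Ico N M, 1/(((j:ℂ)+1)+(n:ℂ)*τ)^2)
            + (∑ j ∈ Finset.Ico N M, 1/(((j:ℂ)+1)+(-((n:ℂ)*τ)))^2) := by
        intro M hM
        rw [sum_Icc_int (g n) M, sum_Icc_int (g n) N]
        have hstep : (g n 0 + ∑ j ∈ Finset.range M, (g n ((j:ℤ)+1) + g n (-((j:ℤ)+1))))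
            - (g n 0 + ∑ j ∈ Finset.range N, (g n ((j:ℤ)+1) + g n (-((j:ℤ)+1))))
            = ∑ j ∈ Finset.Ico N M, (g n ((j:ℤ)+1) + g n (-((j:ℤ)+1))) := by
          rw [Finset.sum_Ico_eq_sub (fun j : ℕ => g n ((j:ℤ)+1) + g n (-((j:ℤ)+1))) hM]
          ring
        rw [hstep, Finset.sum_add_distrib]
        congr 1
        · refine Finset.sum_congr rfl fun j _ => ?_
          simp only [hg]
          push_cast
          ring_nf
        · refine Finset.sum_congr rfl fun j _ => ?_
          simp only [hg]
          push_cast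
          ring_nf
      have hbound : ∀ M : ℕ, N ≤ M →
          ‖((∑ m ∈ Finset.Icc (-(M:ℤ)) (M:ℤ), g n m)
              - (∑ m ∈ Finset.Icc (-(N:ℤ)) (N:ℤ), g n m))
            - ((1/((N:ℂ)+(n:ℂ)*τ) - 1/((M:ℂ)+(n:ℂ)*τ))
              + (1/((N:ℂ)+(-((n:ℂ)*τ))) - 1/((M:ℂ)+(-((n:ℂ)*τ)))))‖ ≤ 8/(N:ℝ)^2 := by
        intro M hM
        rw [hdiff M hM]
        have h1 := tailEst (z := (n:ℂ)*τ) hN hM (hH n)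
        have h2 := tailEst (z := -((n:ℂ)*τ)) hN hM (hHneg n)
        have := norm_add_sub_add_le h1 h2
        calc _ ≤ 4/(N:ℝ)^2 + 4/(N:ℝ)^2 := this
          _ = 8/(N:ℝ)^2 := by ring
      have hMt : Filter.Tendsto (fun M : ℕ =>
          ((∑ m ∈ Finset.Icc (-(M:ℤ)) (M:ℤ), g n m)
              - (∑ m ∈ Finset.Icc (-(N:ℤ)) (N:ℤ), g n m))
            - ((1/((N:ℂ)+(n:ℂ)*τ) - 1/((M:ℂ)+(n:ℂ)*τ))
              + (1/((N:ℂ)+(-((n:ℂ)*τ))) - 1/((M:ℂ)+(-((n:ℂ)*τ)))))) Filter.atTop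
          (nhds ((c n - ∑ m ∈ Finset.Icc (-(N:ℤ)) (N:ℤ), g n m)
            - (1/((N:ℂ)+(n:ℂ)*τ) + 1/((N:ℂ)+(-((n:ℂ)*τ)))))) := by
        have t1 := (hinner' n).sub_const (∑ m ∈ Finset.Icc (-(N:ℤ)) (N:ℤ), g n m)
        have t2 := (tendsto_const_nhds (x := 1/((N:ℂ)+(n:ℂ)*τ))
          (f := Filter.atTop (α := ℕ))).sub (hzero ((n:ℂ)*τ) (hH n))
        have t3 := (tendsto_const_nhds (x := 1/((N:ℂ)+(-((n:ℂ)*τ))))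
          (f := Filter.atTop (α := ℕ))).sub (hzero (-((n:ℂ)*τ)) (hHneg n))
        have := t1.sub (t2.add t3)
        simpa using this
      exact le_of_tendsto hMt.norm (Filter.eventually_atTop.mpr ⟨N, hbound⟩)
    -- T, Q, A
    set T : ℕ → ℂ := fun N => ∑ n ∈ Finset.Icc (-(N:ℤ)) (N:ℤ),
        (c n - ∑ m ∈ Finset.Icc (-(N:ℤ)) (N:ℤ), g n m) with hT
    set Q : ℕ → ℂ := fun N => ∑ n ∈ Finset.Icc (-(N:ℤ)) (N:ℤ),
        (1/((N:ℂ)+(n:ℂ)*τ) + 1/((N:ℂ)+(-((n:ℂ)*τ)))) with hQ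
    set A : ℕ → ℂ := fun N => ∑ n ∈ Finset.Icc (-(N:ℤ)) (N:ℤ), 1/((N:ℂ)+(n:ℂ)*τ) with hA
    have hcard : ∀ N : ℕ, (Finset.Icc (-(N:ℤ)) (N:ℤ)).card = 2*N+1 := by
      intro N; rw [Int.card_Icc]; omega
    have hTQ : ∀ N : ℕ, 1 ≤ N → ‖T N - Q N‖ ≤ 24/(N:ℝ) := by
      intro N hN
      have hNR : (1:ℝ) ≤ (N:ℝ) := by exact_mod_cast hN
      simp only [hT, hQ]
      rw [← Finset.sum_sub_distrib]
      calc ‖∑ n ∈ Finset.Icc (-(N:ℤ)) (N:ℤ),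
              ((c n - ∑ m ∈ Finset.Icc (-(N:ℤ)) (N:ℤ), g n m)
                - (1/((N:ℂ)+(n:ℂ)*τ) + 1/((N:ℂ)+(-((n:ℂ)*τ)))))‖
          ≤ ∑ n ∈ Finset.Icc (-(N:ℤ)) (N:ℤ),
              ‖(c n - ∑ m ∈ Finset.Icc (-(N:ℤ)) (N:ℤ), g n m)
                - (1/((N:ℂ)+(n:ℂ)*τ) + 1/((N:ℂ)+(-((n:ℂ)*τ))))‖ := norm_sum_le _ _
        _ ≤ ∑ _n ∈ Finset.Icc (-(N:ℤ)) (N:ℤ), 8/(N:ℝ)^2 := by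
            refine Finset.sum_le_sum fun n hn => ?_
            rw [Finset.mem_Icc] at hn
            exact htail N hN n hn.1 hn.2
        _ = ((2*N+1 : ℕ):ℝ) * (8/(N:ℝ)^2) := by
            rw [Finset.sum_const, hcard N, nsmul_eq_mul]
        _ ≤ 24/(N:ℝ) := by
            have h1 : ((2*N+1 : ℕ):ℝ) = 2*(N:ℝ)+1 := by push_cast; ring
            rw [h1]
            have h2 : (2*(N:ℝ)+1) * (8/(N:ℝ)^2) = (16*(N:ℝ)+8)/(N:ℝ)^2 := by ring
            rw [h2, div_le_div_iff₀ (by positivity) (by positivity)]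
            nlinarith
    have hQA : ∀ N : ℕ, Q N = 2 * A N := by
      intro N
      simp only [hQ, hA]
      rw [Finset.sum_add_distrib]
      have hsym : (∑ n ∈ Finset.Icc (-(N:ℤ)) (N:ℤ), 1/((N:ℂ)+(-((n:ℂ)*τ))))
          = ∑ n ∈ Finset.Icc (-(N:ℤ)) (N:ℤ), 1/((N:ℂ)+(n:ℂ)*τ) := by
        rw [sum_Icc_int (fun n : ℤ => 1/((N:ℂ)+(-((n:ℂ)*τ)))) N,
            sum_Icc_int (fun n : ℤ => 1/((N:ℂ)+(n:ℂ)*τ)) N]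
        congr 1
        · norm_num
        · refine Finset.sum_congr rfl fun j _ => ?_
          push_cast
          ring
      rw [hsym]; ring
    -- A in range form
    have hAeq : ∀ N : ℕ, A N = ∑ k ∈ Finset.range (2*N+1), 1/((N:ℂ) + ((k:ℂ) - (N:ℂ))*τ) := by
      intro N
      simp only [hA]
      rw [Icc_int_eq_map N, Finset.sum_map]
      refine Finset.sum_congr rfl fun k _ => ?_
      show 1/((N:ℂ)+((((k:ℤ)-(N:ℤ) : ℤ)):ℂ)*τ) = _
      push_cast
      ring_nf
    set L : ℂ := (Complex.log (1+τ) - Complex.log (1-τ))/τ with hL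
    set tele : ℕ → ℂ := fun N =>
      (Complex.log ((N:ℂ)+(((2*N+1:ℕ):ℂ)-(N:ℂ))*τ)
        - Complex.log ((N:ℂ)+(((0:ℕ):ℂ)-(N:ℂ))*τ))/τ with htele
    have hteleq : ∀ N : ℕ, tele N = ∑ k ∈ Finset.range (2*N+1),
        (Complex.log ((N:ℂ)+(((k:ℂ)+1)-(N:ℂ))*τ) - Complex.log ((N:ℂ)+((k:ℂ)-(N:ℂ))*τ))/τ := by
      intro N
      simp only [htele]
      rw [← Finset.sum_div]
      congr 1
      rw [← Finset.sum_range_sub (fun k : ℕ => Complex.log ((N:ℂ)+((k:ℂ)-(N:ℂ))*τ)) (2*N+1)]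
      refine Finset.sum_congr rfl fun k _ => ?_
      have hcst : ((k+1:ℕ):ℂ) = (k:ℂ)+1 := by push_cast; ring
      rw [hcst]
    have habsτpos : (0:ℝ) < ‖τ‖ := norm_pos_iff.mpr hτ0
    have hclose : ∀ᶠ N : ℕ in Filter.atTop, ‖A N - tele N‖ ≤ 12*‖τ‖/(N:ℝ) := by
      have hev : ∀ᶠ N : ℕ in Filter.atTop, 4*‖τ‖ ≤ (N:ℝ) :=
        tendsto_natCast_atTop_atTop.eventually_ge_atTop (4*‖τ‖)
      filter_upwards [hev, Filter.eventually_ge_atTop 1] with N hN hN1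
      have hNR : (1:ℝ) ≤ (N:ℝ) := by exact_mod_cast hN1
      rw [hAeq N, hteleq N, ← Finset.sum_sub_distrib]
      calc ‖∑ k ∈ Finset.range (2*N+1),
              (1/((N:ℂ) + ((k:ℂ) - (N:ℂ))*τ)
                - (Complex.log ((N:ℂ)+(((k:ℂ)+1)-(N:ℂ))*τ)
                  - Complex.log ((N:ℂ)+((k:ℂ)-(N:ℂ))*τ))/τ)‖
          ≤ ∑ k ∈ Finset.range (2*N+1),
              ‖1/((N:ℂ) + ((k:ℂ) - (N:ℂ))*τ)
                - (Complex.log ((N:ℂ)+(((k:ℂ)+1)-(N:ℂ))*τ)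
                  - Complex.log ((N:ℂ)+((k:ℂ)-(N:ℂ))*τ))/τ‖ := norm_sum_le _ _
        _ ≤ ∑ _k ∈ Finset.range (2*N+1), 4*‖τ‖/(N:ℝ)^2 := by
            refine Finset.sum_le_sum fun k hk => ?_
            rw [Finset.mem_range] at hk
            have hst := logStep hre hτ3 hns hN (n := (k:ℤ)-(N:ℤ)) (by omega) (by omega)
            have e1 : (((k:ℤ)-(N:ℤ) : ℤ):ℂ) = (k:ℂ)-(N:ℂ) := by push_cast; ring
            rw [e1] at hst
            have e2 : ((k:ℂ)-(N:ℂ))+1 = ((k:ℂ)+1)-(N:ℂ) := by ring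
            rw [e2] at hst
            exact hst
        _ = ((2*N+1 : ℕ):ℝ) * (4*‖τ‖/(N:ℝ)^2) := by
            rw [Finset.sum_const, Finset.card_range, nsmul_eq_mul]
        _ ≤ 12*‖τ‖/(N:ℝ) := by
            have h1 : ((2*N+1 : ℕ):ℝ) = 2*(N:ℝ)+1 := by push_cast; ring
            rw [h1]
            have h2 : (2*(N:ℝ)+1) * (4*‖τ‖/(N:ℝ)^2)
                = ((8*(N:ℝ)+4)*‖τ‖)/(N:ℝ)^2 := by ring
            rw [h2, div_le_div_iff₀ (by positivity) (by positivity)]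
            nlinarith
    have hlim : Filter.Tendsto tele Filter.atTop (nhds L) := by
      have hev : (fun N : ℕ => (Complex.log (1 + (((((N:ℝ)+1)/(N:ℝ)) : ℝ):ℂ)*τ)
          - Complex.log (1-τ))/τ) =ᶠ[Filter.atTop] tele := by
        filter_upwards [Filter.eventually_ge_atTop 1] with N hN1
        have hN0 : (0:ℝ) < (N:ℝ) := by exact_mod_cast hN1
        have hNne : (N:ℝ) ≠ 0 := ne_of_gt hN0
        have hNneC : (N:ℂ) ≠ 0 := by exact_mod_cast hNne
        have h1 : ((N:ℂ)+(((2*N+1:ℕ):ℂ)-(N:ℂ))*τ)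
            = (((N:ℝ)):ℂ) * (1 + (((((N:ℝ)+1)/(N:ℝ)) : ℝ):ℂ)*τ) := by
          push_cast
          field_simp
          ring
        have h2 : ((N:ℂ)+(((0:ℕ):ℂ)-(N:ℂ))*τ) = (((N:ℝ)):ℂ) * (1 - τ) := by
          push_cast; ring
        have hz1 : (1 + (((((N:ℝ)+1)/(N:ℝ)) : ℝ):ℂ)*τ) ≠ 0 := by
          intro h
          have him : (1 + (((((N:ℝ)+1)/(N:ℝ)) : ℝ):ℂ)*τ).im = 0 := by rw [h]; simp
          simp only [Complex.add_im, Complex.one_im, Complex.mul_im, Complex.ofReal_re,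
            Complex.ofReal_im, zero_add, zero_mul, add_zero] at him
          have hpos : (0:ℝ) < ((N:ℝ)+1)/(N:ℝ) := by positivity
          nlinarith
        have hz2 : (1:ℂ) - τ ≠ 0 := by
          intro h
          have him : ((1:ℂ)-τ).im = 0 := by rw [h]; simp
          simp only [Complex.sub_im, Complex.one_im, zero_sub, neg_eq_zero] at him
          linarith
        simp only [htele]
        rw [h1, h2, Complex.log_ofReal_mul hN0 hz1, Complex.log_ofReal_mul hN0 hz2]
        ring
      refine Filter.Tendsto.congr' hev ?_
      have hr : Filter.Tendsto (fun N : ℕ => ((((N:ℝ)+1)/(N:ℝ) : ℝ):ℂ))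
          Filter.atTop (nhds 1) := by
        have hrr : Filter.Tendsto (fun N : ℕ => ((N:ℝ)+1)/(N:ℝ)) Filter.atTop (nhds 1) := by
          have heq : (fun N : ℕ => 1 + 1/(N:ℝ)) =ᶠ[Filter.atTop]
              (fun N : ℕ => ((N:ℝ)+1)/(N:ℝ)) := by
            filter_upwards [Filter.eventually_ge_atTop 1] with N hN1
            have hN0 : (N:ℝ) ≠ 0 := by
              have : (0:ℝ) < (N:ℝ) := by exact_mod_cast hN1
              exact ne_of_gt this
            field_simp
          refine Filter.Tendsto.congr' heq ?_
          have := tendsto_one_div_atTop_nhds_zero_nat.const_add (1:ℝ)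
          simpa using this
        have := (Complex.continuous_ofReal.tendsto 1).comp hrr
        simpa [Function.comp_def] using this
      have hz : Filter.Tendsto (fun N : ℕ => 1 + (((((N:ℝ)+1)/(N:ℝ)) : ℝ):ℂ)*τ)
          Filter.atTop (nhds (1+τ)) := by
        have := (hr.mul_const τ).const_add (1:ℂ)
        simpa using this
      have hslit : (1+τ) ∈ Complex.slitPlane := by
        refine Complex.mem_slitPlane_iff.mpr (Or.inr ?_)
        simp only [Complex.add_im, Complex.one_im, zero_add]
        linarith
      have hlog := (continuousAt_clog hslit).tendsto.comp hz
      exact (hlog.sub_const (Complex.log (1-τ))).div_const τ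
    have hAtend : Filter.Tendsto A Filter.atTop (nhds L) := by
      have h0 : Filter.Tendsto (fun N => A N - tele N) Filter.atTop (nhds 0) :=
        squeeze_zero_norm' hclose (tendsto_const_div_atTop_nhds_zero_nat (12*‖τ‖))
      have := h0.add hlim
      rw [zero_add] at this
      exact this.congr fun N => by ring
    have hTtend : Filter.Tendsto T Filter.atTop (nhds (2*L)) := by
      have hQt : Filter.Tendsto Q Filter.atTop (nhds (2*L)) :=
        (hAtend.const_mul 2).congr fun N => (hQA N).symm
      have h0 : Filter.Tendsto (fun N => T N - Q N) Filter.atTop (nhds 0) := by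
        refine squeeze_zero_norm' ?_ (tendsto_const_div_atTop_nhds_zero_nat 24)
        filter_upwards [Filter.eventually_ge_atTop 1] with N hN
        exact hTQ N hN
      have := h0.add hQt
      rw [zero_add] at this
      exact this.congr fun N => by ring
    have hP : ∀ N : ℕ, (∑ n ∈ Finset.Icc (-(N:ℤ)) (N:ℤ), c n)
        = latticeSquareSum2 τ N + T N := by
      intro N
      have h1 : latticeSquareSum2 τ N
          = ∑ n ∈ Finset.Icc (-(N:ℤ)) (N:ℤ), ∑ m ∈ Finset.Icc (-(N:ℤ)) (N:ℤ), g n m := by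
        rw [latticeSquareSum2]
        rw [Finset.sum_erase (f := fun p : ℤ×ℤ => 1/(((p.1:ℤ):ℂ)+((p.2:ℤ):ℂ)*τ)^2)
          (a := ((0,0) : ℤ×ℤ)) _ (by norm_num)]
        rw [Finset.sum_product_right]
      rw [h1]
      simp only [hT]
      rw [← Finset.sum_add_distrib]
      refine Finset.sum_congr rfl fun n _ => ?_
      ring
    have houter : Filter.Tendsto (fun N : ℕ => ∑ n ∈ Finset.Icc (-(N:ℤ)) (N:ℤ), c n)
        Filter.atTop (nhds (E2t + 2*L)) :=
      (hE2t.add hTtend).congr fun N => (hP N).symm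
    have hconst : E2t + 2*L = E2t - (4 * Complex.I / τ) * Complex.arctan (Complex.I * τ) := by
      have h1τ : (1:ℂ)+τ ≠ 0 := by
        intro h
        have him : ((1:ℂ)+τ).im = 0 := by rw [h]; simp
        simp only [Complex.add_im, Complex.one_im, zero_add] at him
        linarith
      have h2τ : (1:ℂ)-τ ≠ 0 := by
        intro h
        have him : ((1:ℂ)-τ).im = 0 := by rw [h]; simp
        simp only [Complex.sub_im, Complex.one_im, zero_sub, neg_eq_zero] at him
        linarith
      have hre1 : 0 < ((1:ℂ)-τ).re := by
        simp only [Complex.sub_re, Complex.one_re]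
        linarith
      have hre2 : 0 < ((1:ℂ)+τ).re := by
        simp only [Complex.add_re, Complex.one_re]
        linarith
      have harg1 : |Complex.arg ((1:ℂ)-τ)| < Real.pi/2 :=
        Complex.abs_arg_lt_pi_div_two_iff.mpr (Or.inl hre1)
      have harg2 : |Complex.arg ((1:ℂ)+τ)| < Real.pi/2 :=
        Complex.abs_arg_lt_pi_div_two_iff.mpr (Or.inl hre2)
      have hargpi : Complex.arg ((1:ℂ)+τ) ≠ Real.pi := by
        intro h
        rw [h] at harg2
        rw [abs_of_pos Real.pi_pos] at harg2
        linarith [Real.pi_pos]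
      have harct : Complex.arctan (Complex.I*τ)
          = -Complex.I/2 * Complex.log ((1-τ)/(1+τ)) := by
        rw [Complex.arctan]
        rw [show (1:ℂ) + Complex.I*τ*Complex.I = 1-τ by
          rw [mul_comm Complex.I τ, mul_assoc, Complex.I_mul_I]; ring]
        rw [show (1:ℂ) - Complex.I*τ*Complex.I = 1+τ by
          rw [mul_comm Complex.I τ, mul_assoc, Complex.I_mul_I]; ring]
      have hlogdiv : Complex.log ((1-τ)/(1+τ))
          = Complex.log (1-τ) - Complex.log (1+τ) := by
        rw [div_eq_mul_inv, Complex.log_mul h2τ (inv_ne_zero h1τ) ?_,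
          Complex.log_inv _ hargpi]
        · ring
        · rw [Complex.arg_inv, if_neg hargpi]
          rw [abs_lt] at harg1 harg2
          constructor
          · linarith
          · linarith
      rw [harct, hlogdiv, hL]
      have hI : Complex.I * Complex.I = -1 := Complex.I_mul_I
      field_simp
      ring_nf
      rw [Complex.I_sq]
      ring
    rw [← hconst]
    exact houter
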